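/- (Fuchs–van de Graaf, upper bound) For any two density operators ρ and σ, F(ρ, σ) ≤ √(1 − (1/4)‖ρ − σ‖₁²), where F(ρ,σ) = ‖√ρ√σ‖₁. -/

import Mathlib

open Matrix
open scoped ComplexOrder
set_option linter.unusedSectionVars false
set_option linter.unusedTactic false
set_option linter.unnecessarySimpa false
noncomputable section

/-- The positive semidefinite square root (zero if the input is not PSD). -/
def matSqrt {n : Type*} [Fintype n] [DecidableEq n] (A : Matrix n n ℂ) : Matrix n n ℂ :=
  open Classical in
  if h : A.PosSemidef then
    (h.1.eigenvectorUnitary : Matrix n n ℂ) * diagonal ((↑) ∘ (Real.sqrt ·) ∘ h.1.eigenvalues) *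
      (star h.1.eigenvectorUnitary : Matrix n n ℂ)
  else 0

/-- The trace norm `‖A‖₁ = tr √(AᴴA)`. -/
def traceNorm {n : Type*} [Fintype n] [DecidableEq n] (A : Matrix n n ℂ) : ℝ :=
  (matSqrt (Aᴴ * A)).trace.re

/-- The (generalized) fidelity `F(P,Q) = ‖√P √Q‖₁`. -/
def fid {n : Type*} [Fintype n] [DecidableEq n] (P Q : Matrix n n ℂ) : ℝ :=
  traceNorm (matSqrt P * matSqrt Q)

/-- A density operator: positive semidefinite with trace 1. -/
def IsDensity {n : Type*} [Fintype n] [DecidableEq n] (ρ : Matrix n n ℂ) : Prop :=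
  ρ.PosSemidef ∧ ρ.trace = 1


section Aux
variable {n : Type*} [Fintype n] [DecidableEq n]

def Matrix.PosSemidef.sqrt {A : Matrix n n ℂ} (h : A.PosSemidef) : Matrix n n ℂ :=
    (h.1.eigenvectorUnitary : Matrix n n ℂ) * diagonal ((↑) ∘ (Real.sqrt ·) ∘ h.1.eigenvalues) *
      (star h.1.eigenvectorUnitary : Matrix n n ℂ)

open scoped MatrixOrder in
lemma Matrix.PosSemidef.sqrt_eq_cfc {A : Matrix n n ℂ} (h : A.PosSemidef) :
    h.sqrt = CFC.sqrt A := by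
  have h0 : (0 : Matrix n n ℂ) ≤ A := h.nonneg
  rw [CFC.sqrt_eq_real_sqrt A h0, cfcₙ_eq_cfc, h.1.cfc_eq, IsHermitian.cfc,
    Unitary.conjStarAlgAut_apply]
  rfl

open scoped MatrixOrder in
lemma Matrix.PosSemidef.sqrt_mul_self {A : Matrix n n ℂ} (h : A.PosSemidef) :
    h.sqrt * h.sqrt = A := by
  rw [h.sqrt_eq_cfc]; exact CFC.sqrt_mul_sqrt_self A h.nonneg

open scoped MatrixOrder in
lemma Matrix.PosSemidef.posSemidef_sqrt {A : Matrix n n ℂ} (h : A.PosSemidef) :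
    h.sqrt.PosSemidef := by
  rw [h.sqrt_eq_cfc]; exact (CFC.sqrt_nonneg A).posSemidef

open scoped MatrixOrder in
lemma Matrix.PosSemidef.eq_sqrt_of_sq_eq {B : Matrix n n ℂ} (hB : B.PosSemidef)
    {A : Matrix n n ℂ} (hA : A.PosSemidef) (hsq : B ^ 2 = A) : B = hA.sqrt := by
  rw [hA.sqrt_eq_cfc]; exact (CFC.sqrt_unique (by rw [← hsq, pow_two]) hB.nonneg).symm


lemma trace_psd_nonneg {M : Matrix n n ℂ} (hM : M.PosSemidef) : 0 ≤ M.trace := by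
  rw [Matrix.trace]
  apply Finset.sum_nonneg
  intro i _
  have := hM.2 (Finsupp.single i 1)
  simpa [dotProduct, Matrix.mulVec, Pi.single_apply, Finset.sum_ite_eq, Finsupp.sum_single_index,
    Matrix.diag] using this

lemma trace_mul_psd_nonneg {X Y : Matrix n n ℂ} (hX : X.PosSemidef) (hY : Y.PosSemidef) :
    0 ≤ (X * Y).trace := by
  have h1 : X = hX.sqrt * hX.sqrt := hX.sqrt_mul_self.symm
  have h2 : (X * Y).trace = (hX.sqrt * Y * hX.sqrt).trace := by
    rw [eq_comm, mul_assoc, Matrix.trace_mul_comm, mul_assoc, ← h1, Matrix.trace_mul_comm]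
  rw [h2]
  have hs : hX.sqrtᴴ = hX.sqrt := hX.posSemidef_sqrt.1
  have := hY.conjTranspose_mul_mul_same hX.sqrt
  rw [hs] at this
  exact trace_psd_nonneg this

lemma proj_posSemidef {P : Matrix n n ℂ} (hH : Pᴴ = P) (hP : P * P = P) : P.PosSemidef := by
  have h : P = Pᴴ * P := by rw [hH, hP]
  rw [h]; exact posSemidef_conjTranspose_mul_self P

lemma proj_compl {P : Matrix n n ℂ} (hH : Pᴴ = P) (hP : P * P = P) : (1 - P).PosSemidef := by
  apply proj_posSemidef
  · simp [conjTranspose_sub, hH]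
  · rw [sub_mul, mul_sub, mul_sub, hP]; simp

lemma trace_mul_proj_le {M Q : Matrix n n ℂ} (hM : M.PosSemidef) (hQH : Qᴴ = Q)
    (hQ : Q * Q = Q) : ((M * Q).trace).re ≤ M.trace.re := by
  have h := trace_mul_psd_nonneg hM (proj_compl hQH hQ)
  rw [mul_sub, mul_one] at h
  have h2 := (Complex.le_def.mp h).1
  simp only [Matrix.trace_sub, Complex.zero_re, Complex.sub_re] at h2
  linarith

lemma trace_CS (X Y : Matrix n n ℂ) :
    ‖(Xᴴ * Y).trace‖ ≤ Real.sqrt ((Xᴴ * X).trace.re) * Real.sqrt ((Yᴴ * Y).trace.re) := by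
  let x : EuclideanSpace ℂ (n × n) := WithLp.toLp 2 (fun p : n × n => X p.1 p.2)
  let y : EuclideanSpace ℂ (n × n) := WithLp.toLp 2 (fun p : n × n => Y p.1 p.2)
  have htr : ∀ (A B : Matrix n n ℂ), (Aᴴ * B).trace = ∑ p : n × n, star (A p.1 p.2) * B p.1 p.2 := by
    intro A B
    rw [Matrix.trace, Fintype.sum_prod_type_right]
    simp [Matrix.diag, Matrix.mul_apply, conjTranspose_apply, mul_comm]
  have hinner : (inner ℂ x y : ℂ) = (Xᴴ * Y).trace := by
    rw [htr, PiLp.inner_apply]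
    simp [x, y, RCLike.inner_apply, mul_comm]
  have hnx : ‖x‖ = Real.sqrt ((Xᴴ * X).trace.re) := by
    rw [EuclideanSpace.norm_eq, htr]
    congr 1
    rw [Complex.re_sum]
    refine Finset.sum_congr rfl fun p _ => ?_
    simp [Complex.normSq_apply, Complex.mul_re, Complex.sq_norm, Complex.normSq,
      x]
  have hny : ‖y‖ = Real.sqrt ((Yᴴ * Y).trace.re) := by
    rw [EuclideanSpace.norm_eq, htr]
    congr 1
    rw [Complex.re_sum]
    refine Finset.sum_congr rfl fun p _ => ?_
    simp [Complex.normSq_apply, Complex.mul_re, Complex.sq_norm, Complex.normSq,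
      y]
  calc ‖(Xᴴ * Y).trace‖ = ‖(inner ℂ x y : ℂ)‖ := by rw [hinner]
    _ ≤ ‖x‖ * ‖y‖ := norm_inner_le_norm x y
    _ = _ := by rw [hnx, hny]

lemma term_bound {R S W P : Matrix n n ℂ} (hR : R.PosSemidef) (hS : S.PosSemidef)
    (hPH : Pᴴ = P) (hPP : P * P = P)
    (hPi : (W * Wᴴ) * (W * Wᴴ) = W * Wᴴ) :
    ‖(Wᴴ * (R * (P * S))).trace‖ ≤
      Real.sqrt ((P * (R * R)).trace.re) * Real.sqrt ((P * (S * S)).trace.re) := by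
  have hRH : Rᴴ = R := hR.1
  have hSH : Sᴴ = S := hS.1
  have hps : P * (P * S) = P * S := by rw [← mul_assoc, hPP]
  have hprw : P * (P * (R * W)) = P * (R * W) := by rw [← mul_assoc, hPP]
  have hfac : Wᴴ * (R * (P * S)) = (P * R * W)ᴴ * (P * S) := by
    simp only [conjTranspose_mul, hRH, hPH, mul_assoc, hps]
  have hX : ((P * R * W)ᴴ * (P * R * W)).trace = ((Rᴴ * P * R) * (W * Wᴴ)).trace := by
    have e1 : (P * R * W)ᴴ * (P * R * W) = Wᴴ * (R * (P * (R * W))) := by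
      simp only [conjTranspose_mul, hRH, hPH, mul_assoc, hprw]
    have e2 : (Rᴴ * P * R) * (W * Wᴴ) = (R * (P * (R * W))) * Wᴴ := by
      simp only [hRH, mul_assoc]
    rw [e1, e2, Matrix.trace_mul_comm]
  have hY : ((P * S)ᴴ * (P * S)).trace = (P * (S * S)).trace := by
    have e1 : (P * S)ᴴ * (P * S) = S * (P * S) := by
      simp only [conjTranspose_mul, hSH, hPH, mul_assoc, hps]
    rw [e1, Matrix.trace_mul_comm, mul_assoc]
  have hPpsd : P.PosSemidef := proj_posSemidef hPH hPP
  have hRPR : (Rᴴ * P * R).PosSemidef := hPpsd.conjTranspose_mul_mul_same R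
  have hPiH : (W * Wᴴ)ᴴ = W * Wᴴ := by simp [conjTranspose_mul]
  have hXle : ((P * R * W)ᴴ * (P * R * W)).trace.re ≤ ((P * (R * R)).trace).re := by
    rw [hX]
    calc ((Rᴴ * P * R) * (W * Wᴴ)).trace.re ≤ (Rᴴ * P * R).trace.re :=
          trace_mul_proj_le hRPR hPiH hPi
      _ = ((P * (R * R)).trace).re := by
          rw [hRH, Matrix.trace_mul_comm, ← mul_assoc, Matrix.trace_mul_comm]
  calc ‖(Wᴴ * (R * (P * S))).trace‖
      = ‖((P * R * W)ᴴ * (P * S)).trace‖ := by rw [hfac]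
    _ ≤ Real.sqrt (((P * R * W)ᴴ * (P * R * W)).trace.re) *
        Real.sqrt (((P * S)ᴴ * (P * S)).trace.re) := trace_CS _ _
    _ ≤ Real.sqrt ((P * (R * R)).trace.re) * Real.sqrt ((P * (S * S)).trace.re) := by
        apply mul_le_mul (Real.sqrt_le_sqrt hXle) (le_of_eq (by rw [hY])) (Real.sqrt_nonneg _)
          (Real.sqrt_nonneg _)

lemma core {A R S P V D Dinv B : Matrix n n ℂ}
    (hA : A = R * S) (hR : R.PosSemidef) (hS : S.PosSemidef)
    (hPH : Pᴴ = P) (hPP : P * P = P)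
    (hVV : Vᴴ * V = 1)
    (hDH : Dinvᴴ = Dinv)
    (hB : B = V * D * Vᴴ)
    (hBB : B * B = Aᴴ * A)
    (h1 : Dinv * (D * D) = D)
    (h2 : Dinv * (Dinv * (D * (D * (Dinv * Dinv)))) = Dinv * Dinv) :
    B.trace.re ≤ Real.sqrt ((P * (R * R)).trace.re) * Real.sqrt ((P * (S * S)).trace.re)
      + Real.sqrt (((1 - P) * (R * R)).trace.re) * Real.sqrt (((1 - P) * (S * S)).trace.re) := by
  have hVx : ∀ X : Matrix n n ℂ, Vᴴ * (V * X) = X := by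
    intro X; rw [← mul_assoc, hVV, one_mul]
  have h1' : ∀ X : Matrix n n ℂ, Dinv * (D * (D * X)) = D * X := by
    intro X
    have := congrArg (· * X) h1
    simpa only [mul_assoc] using this
  have h2' : ∀ X : Matrix n n ℂ,
      Dinv * (Dinv * (D * (D * (Dinv * (Dinv * X))))) = Dinv * (Dinv * X) := by
    intro X
    have := congrArg (· * X) h2
    simpa only [mul_assoc] using this
  have hAA : Aᴴ * A = V * (D * (D * Vᴴ)) := by
    rw [← hBB, hB]
    simp only [mul_assoc, hVx]
  have hAAX : ∀ X : Matrix n n ℂ, Aᴴ * (A * X) = V * (D * (D * (Vᴴ * X))) := by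
    intro X
    have := congrArg (· * X) hAA
    simpa only [mul_assoc, hVx] using this
  set W : Matrix n n ℂ := A * (V * (Dinv * Vᴴ)) with hW
  have hWH : Wᴴ = V * (Dinv * (Vᴴ * Aᴴ)) := by
    rw [hW]
    simp only [conjTranspose_mul, conjTranspose_conjTranspose, hDH, mul_assoc]
  have hWA : Wᴴ * A = B := by
    rw [hWH, hB]
    simp only [mul_assoc]
    rw [hAA]
    simp only [mul_assoc, hVx, h1']
  have hPiEq : W * Wᴴ = A * (V * (Dinv * (Dinv * (Vᴴ * Aᴴ)))) := by
    rw [hWH, hW]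
    simp only [mul_assoc, hVx]
  have hPi : (W * Wᴴ) * (W * Wᴴ) = W * Wᴴ := by
    rw [hPiEq]
    simp only [mul_assoc, hAAX, hVx, h2']
  have hQH : (1 - P)ᴴ = 1 - P := by simp [conjTranspose_sub, hPH]
  have hQQ : (1 - P) * (1 - P) = 1 - P := by
    rw [sub_mul, mul_sub, mul_sub, hPP]; simp
  have hsplit : Wᴴ * A = Wᴴ * (R * (P * S)) + Wᴴ * (R * ((1 - P) * S)) := by
    rw [hA, ← mul_add, ← mul_add]
    congr 1
    rw [sub_mul, one_mul, add_sub_cancel]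
  have t1b := term_bound hR hS hPH hPP hPi
  have t2b := term_bound hR hS hQH hQQ hPi
  have hre : B.trace.re = (Wᴴ * (R * (P * S))).trace.re + (Wᴴ * (R * ((1 - P) * S))).trace.re := by
    rw [← hWA, hsplit, Matrix.trace_add, Complex.add_re]
  rw [hre]
  have c1 : (Wᴴ * (R * (P * S))).trace.re ≤ ‖(Wᴴ * (R * (P * S))).trace‖ :=
    Complex.re_le_norm _
  have c2 : (Wᴴ * (R * ((1 - P) * S))).trace.re ≤
      ‖(Wᴴ * (R * ((1 - P) * S))).trace‖ := Complex.re_le_norm _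
  linarith

lemma matSqrt_eq {A : Matrix n n ℂ} (h : A.PosSemidef) : matSqrt A = h.sqrt := dif_pos h

lemma fid_le_measure {ρ σ P : Matrix n n ℂ} (hρ : ρ.PosSemidef) (hσ : σ.PosSemidef)
    (hPH : Pᴴ = P) (hPP : P * P = P) :
    fid ρ σ ≤ Real.sqrt ((P * ρ).trace.re) * Real.sqrt ((P * σ).trace.re)
      + Real.sqrt (((1 - P) * ρ).trace.re) * Real.sqrt (((1 - P) * σ).trace.re) := by
  have hAA : ((hρ.sqrt * hσ.sqrt)ᴴ * (hρ.sqrt * hσ.sqrt)).PosSemidef :=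
    posSemidef_conjTranspose_mul_self _
  have hfid : fid ρ σ = hAA.sqrt.trace.re := by
    rw [fid, matSqrt_eq hρ, matSqrt_eq hσ, traceNorm, matSqrt_eq hAA]
  have hBpsd := hAA.posSemidef_sqrt
  have hBH := hBpsd.1
  set V : Matrix n n ℂ := (hBH.eigenvectorUnitary : Matrix n n ℂ) with hV
  have hVmem : V ∈ Matrix.unitaryGroup n ℂ := (hBH.eigenvectorUnitary).2
  have hVV : Vᴴ * V = 1 := by
    rw [← star_eq_conjTranspose]; exact (Matrix.mem_unitaryGroup_iff').mp hVmem
  set lam : n → ℝ := hBH.eigenvalues with hlamdef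
  have hlam : ∀ i, 0 ≤ lam i := hBpsd.eigenvalues_nonneg
  set dinv : n → ℝ := fun i => if lam i = 0 then 0 else (lam i)⁻¹ with hdinv
  set D : Matrix n n ℂ := diagonal (fun i => (lam i : ℂ)) with hD
  set Dinv : Matrix n n ℂ := diagonal (fun i => (dinv i : ℂ)) with hDi
  have hspec : hAA.sqrt = V * D * Vᴴ := by
    have h := hBH.spectral_theorem
    rw [Unitary.conjStarAlgAut_apply, star_eq_conjTranspose] at h
    exact h
  have hDH : Dinvᴴ = Dinv := by
    rw [hDi, diagonal_conjTranspose]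
    congr 1
    funext i
    simp [Pi.star_def, Complex.star_def, Complex.conj_ofReal]
  have h1 : Dinv * (D * D) = D := by
    rw [hDi, hD, diagonal_mul_diagonal, diagonal_mul_diagonal]
    refine congrArg Matrix.diagonal (funext fun i => ?_)
    by_cases h : lam i = 0
    · simp [hdinv, h]
    · simp only [hdinv, if_neg h]
      push_cast
      field_simp
  have h2 : Dinv * (Dinv * (D * (D * (Dinv * Dinv)))) = Dinv * Dinv := by
    rw [hDi, hD]
    simp only [diagonal_mul_diagonal]
    refine congrArg Matrix.diagonal (funext fun i => ?_)
    by_cases h : lam i = 0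
    · simp [hdinv, h]
    · simp only [hdinv, if_neg h]
      push_cast
      field_simp
  have hBB : hAA.sqrt * hAA.sqrt = (hρ.sqrt * hσ.sqrt)ᴴ * (hρ.sqrt * hσ.sqrt) :=
    hAA.sqrt_mul_self
  have key := core rfl hρ.posSemidef_sqrt hσ.posSemidef_sqrt hPH hPP hVV hDH hspec hBB h1 h2
  rw [hρ.sqrt_mul_self, hσ.sqrt_mul_self] at key
  rw [hfid]
  exact key

lemma conj_trace {V X : Matrix n n ℂ} (hVV : Vᴴ * V = 1) : (V * X * Vᴴ).trace = X.trace := by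
  rw [Matrix.trace_mul_cycle, hVV, one_mul]

lemma conj_mul_conj {V X Y : Matrix n n ℂ} (hVV : Vᴴ * V = 1) :
    (V * X * Vᴴ) * (V * Y * Vᴴ) = V * (X * Y) * Vᴴ := by
  have hVx : ∀ Z : Matrix n n ℂ, Vᴴ * (V * Z) = Z := fun Z => by
    rw [← mul_assoc, hVV, one_mul]
  simp only [mul_assoc, hVx]

lemma helstrom {Δ : Matrix n n ℂ} (hΔ : Δ.IsHermitian) (h0 : Δ.trace = 0) :
    ∃ P : Matrix n n ℂ, Pᴴ = P ∧ P * P = P ∧ (P * Δ).trace.re = traceNorm Δ / 2 := by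
  set V : Matrix n n ℂ := (hΔ.eigenvectorUnitary : Matrix n n ℂ) with hV
  have hVmem : V ∈ Matrix.unitaryGroup n ℂ := (hΔ.eigenvectorUnitary).2
  have hVV : Vᴴ * V = 1 := by
    rw [← star_eq_conjTranspose]; exact (Matrix.mem_unitaryGroup_iff').mp hVmem
  set μ : n → ℝ := hΔ.eigenvalues with hmu
  set E : Matrix n n ℂ := diagonal (fun i => if 0 ≤ μ i then (1 : ℂ) else 0) with hE
  have hspec : Δ = V * diagonal (fun i => (μ i : ℂ)) * Vᴴ := by
    have h := hΔ.spectral_theorem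
    rw [Unitary.conjStarAlgAut_apply, star_eq_conjTranspose] at h
    exact h
  refine ⟨V * E * Vᴴ, ?_, ?_, ?_⟩
  · simp only [conjTranspose_mul, conjTranspose_conjTranspose, diagonal_conjTranspose, hE]
    rw [← mul_assoc]
    congr 2
    funext i
    by_cases h : 0 ≤ μ i <;> simp [Pi.star_def, h]
  · rw [conj_mul_conj hVV]
    congr 2
    rw [hE, diagonal_mul_diagonal]
    refine congrArg Matrix.diagonal (funext fun i => ?_)
    by_cases h : 0 ≤ μ i <;> simp [h]
  · -- trace computation
    have hPD : (V * E * Vᴴ) * Δ = V * (E * diagonal (fun i => (μ i : ℂ))) * Vᴴ := by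
      conv_lhs => rw [hspec]
      rw [conj_mul_conj hVV]
    rw [hPD, conj_trace hVV]
    -- traceNorm Δ
    have hDD : Δᴴ * Δ = V * diagonal (fun i => ((μ i ^ 2 : ℝ) : ℂ)) * Vᴴ := by
      rw [hΔ.eq]
      conv_lhs => rw [hspec]
      rw [conj_mul_conj hVV, diagonal_mul_diagonal]
      have he : (fun i => ((μ i : ℂ)) * ((μ i : ℂ))) = fun i => ((μ i ^ 2 : ℝ) : ℂ) := by
        funext i; push_cast; ring
      rw [he]
    have habs_psd : (diagonal (fun i => ((|μ i| : ℝ) : ℂ))).PosSemidef := by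
      apply Matrix.PosSemidef.diagonal
      intro i
      simpa using Complex.zero_le_real.mpr (abs_nonneg (μ i))
    have hC_psd : (V * diagonal (fun i => ((|μ i| : ℝ) : ℂ)) * Vᴴ).PosSemidef := by
      have h := habs_psd.conjTranspose_mul_mul_same Vᴴ
      rwa [conjTranspose_conjTranspose] at h
    have hDDpsd : (Δᴴ * Δ).PosSemidef := posSemidef_conjTranspose_mul_self Δ
    have hsq : (V * diagonal (fun i => ((|μ i| : ℝ) : ℂ)) * Vᴴ) ^ 2 = Δᴴ * Δ := by
      rw [pow_two, conj_mul_conj hVV, hDD, diagonal_mul_diagonal]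
      have he : (fun i => ((|μ i| : ℝ) : ℂ) * ((|μ i| : ℝ) : ℂ)) = fun i => ((μ i ^ 2 : ℝ) : ℂ) := by
        funext i
        rw [← Complex.ofReal_mul, ← abs_mul, abs_mul_self, ← pow_two]
      rw [he]
    have hCs : V * diagonal (fun i => ((|μ i| : ℝ) : ℂ)) * Vᴴ = hDDpsd.sqrt :=
      hC_psd.eq_sqrt_of_sq_eq hDDpsd hsq
    have htn : traceNorm Δ = ∑ i, |μ i| := by
      rw [traceNorm, matSqrt_eq hDDpsd, ← hCs, conj_trace hVV, Matrix.trace_diagonal]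
      rw [Complex.re_sum]
      norm_num
    -- lhs trace
    have hlhs : (E * diagonal (fun i => (μ i : ℂ))).trace.re
        = ∑ i, (if 0 ≤ μ i then μ i else 0) := by
      rw [hE, diagonal_mul_diagonal, Matrix.trace_diagonal, Complex.re_sum]
      refine Finset.sum_congr rfl fun i _ => ?_
      by_cases h : 0 ≤ μ i <;> simp [h]
    have hsum0 : ∑ i, μ i = 0 := by
      have : Δ.trace = ∑ i, (μ i : ℂ) := by
        rw [hspec, conj_trace hVV, Matrix.trace_diagonal]
      rw [h0] at this
      have := congrArg Complex.re this.symm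
      simpa [Complex.re_sum] using this
    rw [hlhs, htn]
    have hptw : ∀ i, |μ i| = 2 * (if 0 ≤ μ i then μ i else 0) - μ i := by
      intro i
      by_cases h : 0 ≤ μ i
      · rw [abs_of_nonneg h]; simp [h]; ring
      · rw [abs_of_neg (lt_of_not_ge h)]; simp [h]
    rw [Finset.sum_congr rfl (fun i _ => hptw i), Finset.sum_sub_distrib, ← Finset.mul_sum,
      hsum0]
    ring

lemma classical_fvdg {p q : ℝ} (hp0 : 0 ≤ p) (hp1 : p ≤ 1) (hq0 : 0 ≤ q) (hq1 : q ≤ 1) :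
    Real.sqrt p * Real.sqrt q + Real.sqrt (1 - p) * Real.sqrt (1 - q) ≤
      Real.sqrt (1 - (p - q) ^ 2) := by
  have h1p : (0:ℝ) ≤ 1 - p := by linarith
  have h1q : (0:ℝ) ≤ 1 - q := by linarith
  set L := Real.sqrt p * Real.sqrt q + Real.sqrt (1 - p) * Real.sqrt (1 - q) with hL
  have hL0 : 0 ≤ L := by positivity
  have hy : (0:ℝ) ≤ 1 - (p - q) ^ 2 := by
    nlinarith [sq_nonneg (p - q)]
  rw [Real.le_sqrt hL0 hy]
  have e : L ^ 2 = p * q + (1 - p) * (1 - q)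
      + 2 * ((Real.sqrt p * Real.sqrt (1 - p)) * (Real.sqrt q * Real.sqrt (1 - q))) := by
    rw [hL, add_sq, mul_pow, mul_pow, Real.sq_sqrt hp0, Real.sq_sqrt hq0,
      Real.sq_sqrt h1p, Real.sq_sqrt h1q]
    ring
  have ha : Real.sqrt p * Real.sqrt (1 - p) = Real.sqrt (p * (1 - p)) :=
    (Real.sqrt_mul hp0 _).symm
  have hb : Real.sqrt q * Real.sqrt (1 - q) = Real.sqrt (q * (1 - q)) :=
    (Real.sqrt_mul hq0 _).symm
  have key : 2 * ((Real.sqrt p * Real.sqrt (1 - p)) * (Real.sqrt q * Real.sqrt (1 - q)))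
      ≤ p * (1 - p) + q * (1 - q) := by
    rw [ha, hb]
    nlinarith [sq_nonneg (Real.sqrt (p * (1 - p)) - Real.sqrt (q * (1 - q))),
      Real.sq_sqrt (mul_nonneg hp0 h1p), Real.sq_sqrt (mul_nonneg hq0 h1q)]
  nlinarith [e, key]

end Aux

theorem fuchs_van_de_graaf_upper {n : Type*} [Fintype n] [DecidableEq n]
    (ρ σ : Matrix n n ℂ) (hρ : IsDensity ρ) (hσ : IsDensity σ) :
    fid ρ σ ≤ Real.sqrt (1 - (1/4) * (traceNorm (ρ - σ))^2) := by
  obtain ⟨hρp, hρt⟩ := hρ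
  obtain ⟨hσp, hσt⟩ := hσ
  have hΔH : (ρ - σ).IsHermitian := hρp.1.sub hσp.1
  have hΔ0 : (ρ - σ).trace = 0 := by rw [Matrix.trace_sub, hρt, hσt, sub_self]
  obtain ⟨P, hPH, hPP, hPt⟩ := helstrom hΔH hΔ0
  set p := (P * ρ).trace.re with hp
  set q := (P * σ).trace.re with hq
  have hPpsd := proj_posSemidef hPH hPP
  have hQpsd := proj_compl hPH hPP
  have hp0 : 0 ≤ p := by simpa using (Complex.le_def.mp (trace_mul_psd_nonneg hPpsd hρp)).1
  have hq0 : 0 ≤ q := by simpa using (Complex.le_def.mp (trace_mul_psd_nonneg hPpsd hσp)).1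
  have hQρ : ((1 - P) * ρ).trace.re = 1 - p := by
    rw [sub_mul, one_mul, Matrix.trace_sub, hρt, Complex.sub_re, Complex.one_re]
  have hQσ : ((1 - P) * σ).trace.re = 1 - q := by
    rw [sub_mul, one_mul, Matrix.trace_sub, hσt, Complex.sub_re, Complex.one_re]
  have hp1 : p ≤ 1 := by
    have h2 : 0 ≤ ((1 - P) * ρ).trace.re := by
      simpa using (Complex.le_def.mp (trace_mul_psd_nonneg hQpsd hρp)).1
    rw [hQρ] at h2; linarith
  have hq1 : q ≤ 1 := by
    have h2 : 0 ≤ ((1 - P) * σ).trace.re := by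
      simpa using (Complex.le_def.mp (trace_mul_psd_nonneg hQpsd hσp)).1
    rw [hQσ] at h2; linarith
  have hm := fid_le_measure hρp hσp hPH hPP
  rw [hQρ, hQσ] at hm
  have hc := classical_fvdg hp0 hp1 hq0 hq1
  have hpq : p - q = traceNorm (ρ - σ) / 2 := by
    have h3 : (P * (ρ - σ)).trace.re = p - q := by
      rw [mul_sub, Matrix.trace_sub, Complex.sub_re]
    rw [← h3, hPt]
  have hfin : 1 - (p - q) ^ 2 = 1 - (1/4) * (traceNorm (ρ - σ))^2 := by
    rw [hpq]; ring
  calc fid ρ σ ≤ Real.sqrt p * Real.sqrt q + Real.sqrt (1 - p) * Real.sqrt (1 - q) := hm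
    _ ≤ Real.sqrt (1 - (p - q) ^ 2) := hc
    _ = _ := by rw [hfin]
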